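/- Consider the run-and-chase game with two agents a and b, initial utilities u_a(b) = 1 and u_b(a) = −1, additively separable aggregation, and deviator-resentful agents. Then the alternating sequence where a joins b (forming {a,b}) and b then leaves (restoring singletons), repeated forever, is an infinite execution of the Nash dynamics: at every step the deviating agent strictly improves her current utility, even though b's utility for a decreases by 1 each time b leaves. -/
import Mathlib


/-- The partition at time `t` of the run-and-chase sequence with agents
`a = 0` and `b = 1`: at odd times `{a,b}` is formed, at even times both agents
are in singletons. -/
def coalOf (t : ℕ) (i : Fin 2) : Finset (Fin 2) :=
  if t % 2 = 1 then {0, 1} else {i}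

/-- The agent deviating at step `t`: at odd steps `a` joins `b`, at even steps
`b` leaves to be alone. -/
def dev (t : ℕ) : Fin 2 :=
  if t % 2 = 1 then 0 else 1

/-- Initial utilities: `u_a(b) = 1` and `u_b(a) = -1`. -/
def u0 : Fin 2 → Fin 2 → ℚ := ![![0, 1], ![-1, 0]]

/-- Utilities evolving under deviator-resent: when an agent deviates, she
decreases her own utility for every agent of her abandoned coalition by `1`.
Here `a`'s utility for `b` stays `1` forever, while `b`'s utility for `a`
decreases by `1` each time `b` leaves. -/
def util : ℕ → Fin 2 → Fin 2 → ℚ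
  | 0 => u0
  | (t + 1) => fun i j =>
      if i = dev (t + 1) ∧ j ∈ coalOf t i ∧ j ≠ i then util t i j - 1
      else util t i j

lemma util_inv : ∀ t : ℕ, util t 0 1 = 1 ∧ util t 1 0 ≤ -1 := by
  intro t
  induction t with
  | zero => simp [util, u0]
  | succ t ih =>
    obtain ⟨h01, h10⟩ := ih
    constructor
    · simp only [util]
      rcases Nat.even_or_odd t with he | ho
      · have h2 : t % 2 = 0 := Nat.even_iff.mp he
        simp [dev, coalOf, Nat.succ_mod_two_eq_one_iff.mpr h2, h2, h01]
      · have h2 : t % 2 = 1 := Nat.odd_iff.mp ho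
        have h2' : (t + 1) % 2 = 0 := by omega
        simp [dev, coalOf, h2, h2', h01]
    · simp only [util]
      rcases Nat.even_or_odd t with he | ho
      · have h2 : t % 2 = 0 := Nat.even_iff.mp he
        simp [dev, coalOf, Nat.succ_mod_two_eq_one_iff.mpr h2, h2, h10]
      · have h2 : t % 2 = 1 := Nat.odd_iff.mp ho
        have h2' : (t + 1) % 2 = 0 := by omega
        simp [dev, coalOf, h2, h2']
        linarith

/-- The alternating run-and-chase sequence (`a` joins `b`, then `b` leaves,
repeated forever) is an infinite execution of the Nash dynamics for
deviator-resentful agents with additively separable utilities: at every step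
the deviating agent strictly improves her current utility. -/
theorem stmt_13 :
    ∀ t : ℕ,
      (∑ j ∈ (coalOf t (dev (t + 1))).erase (dev (t + 1)), util t (dev (t + 1)) j) <
        ∑ j ∈ (coalOf (t + 1) (dev (t + 1))).erase (dev (t + 1)), util t (dev (t + 1)) j := by
  intro t
  obtain ⟨h01, h10⟩ := util_inv t
  rcases Nat.even_or_odd t with he | ho
  · have h2 : t % 2 = 0 := Nat.even_iff.mp he
    have h2' : (t + 1) % 2 = 1 := Nat.succ_mod_two_eq_one_iff.mpr h2
    simp [dev, coalOf, h2, h2', Finset.sum_erase_eq_sub, h01]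
  · have h2 : t % 2 = 1 := Nat.odd_iff.mp ho
    have h2' : (t + 1) % 2 = 0 := by omega
    have herase : ({0, 1} : Finset (Fin 2)).erase 1 = {0} := by decide
    simp [dev, coalOf, h2, h2', herase]
    linarith
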